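/- Suppose (ρ_l)_{l∈ℕ^S} is a family of nonnegative real numbers such that Σ_{l∈ℕ^S} ρ_l v^l = ρ(v) for every v with all coordinates v_k ∈ [0,1). Then the family (ρ_l) is summable with Σ_{l∈ℕ^S} ρ_l = ρ; consequently the numbers ρ^{-1} ρ_l (when ρ > 0) are nonnegative and sum to 1, i.e., they form a probability distribution on ℕ^S. -/

import Mathlib

open Filter Topology

private lemma aux_summable {b : ℕ → ℝ} (hb : Summable b) {c : ℕ → ℝ}
    (hc : ∀ j, |c j| ≤ |b j|) {u : ℝ} (hu : |u| ≤ 1) :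
    Summable fun j => c j * u ^ j := by
  apply Summable.of_norm_bounded hb.abs
  intro j
  rw [Real.norm_eq_abs, abs_mul, abs_pow]
  calc |c j| * |u| ^ j ≤ |b j| * 1 :=
        mul_le_mul (hc j) (pow_le_one₀ (abs_nonneg u) hu)
          (pow_nonneg (abs_nonneg u) j) (abs_nonneg _)
    _ = |b j| := mul_one _

private lemma aux_cont {b : ℕ → ℝ} (hb : Summable b) {c : ℕ → ℝ}
    (hc : ∀ j, |c j| ≤ |b j|) :
    ContinuousOn (fun u : ℝ => ∑' j : ℕ, c j * u ^ j) (Set.Icc (-1) 1) := by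
  apply continuousOn_tsum (u := fun j => |b j|)
    (fun j => (continuous_const.mul (continuous_pow j)).continuousOn) hb.abs
  intro n x hx
  rw [Real.norm_eq_abs]; show |c n * x ^ n| ≤ |b n|; rw [abs_mul, abs_pow]
  have hx1 : |x| ≤ 1 := abs_le.2 ⟨hx.1, hx.2⟩
  calc |c n| * |x| ^ n ≤ |b n| * 1 :=
        mul_le_mul (hc n) (pow_le_one₀ (abs_nonneg x) hx1)
          (pow_nonneg (abs_nonneg x) n) (abs_nonneg _)
    _ = |b n| := mul_one _

private lemma aux_decomp (b : ℕ → ℝ) (hb : Summable b) (S : Finset ℕ) (t u : ℝ)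
    (hu : |u| ≤ 1) :
    (∑' j : ℕ, (if j ∈ S then b j * t else b j) * u ^ j)
      = (∑' j : ℕ, b j * u ^ j) - (1 - t) * ∑ k ∈ S, b k * u ^ k := by
  have h1 : Summable fun j => b j * u ^ j := aux_summable hb (fun j => le_refl _) hu
  have h2 : Summable fun j : ℕ => if j ∈ S then (1 - t) * (b j * u ^ j) else 0 :=
    summable_of_ne_finset_zero (s := S) (fun j hj => if_neg hj)
  have key : ∀ j : ℕ, (if j ∈ S then b j * t else b j) * u ^ j
      = b j * u ^ j - (if j ∈ S then (1 - t) * (b j * u ^ j) else 0) := by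
    intro j; split <;> ring
  rw [tsum_congr key, Summable.tsum_sub h1 h2,
    tsum_eq_sum (s := S) (fun j hj => if_neg hj), Finset.mul_sum]
  congr 1
  exact Finset.sum_congr rfl fun k hk => by rw [if_pos hk]

theorem stmt_9 (b : ℕ → ℝ)
    (hb_nonneg : ∀ j, j ≠ 1 → 0 ≤ b j) (hb1 : b 1 < 0)
    (hb_sum : Summable b) (hb_total : ∑' j, b j = 0)
    (ρ : ℝ) (hρ : IsLeast {u ∈ Set.Icc (0:ℝ) 1 | (∑' j : ℕ, b j * u ^ j) = 0} ρ)
    (S : Finset ℕ) (hS : S.Nonempty) (hS1 : 1 ∉ S)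
    (hbS : ∀ k ∈ S, 0 < b k)
    (ρfun : (S → ℝ) → ℝ)
    (hρfun : ∀ v : S → ℝ, (∀ k, v k ∈ Set.Icc (0:ℝ) 1) →
      IsLeast {u ∈ Set.Icc (0:ℝ) 1 |
        (∑' j : ℕ, if h : j ∈ S then b j * v ⟨j, h⟩ * u ^ j else b j * u ^ j) = 0} (ρfun v))
    (ρc : (S → ℕ) → ℝ) (hρc_nonneg : ∀ l, 0 ≤ ρc l)
    (hρc : ∀ v : S → ℝ, (∀ k, v k ∈ Set.Ico (0:ℝ) 1) →
      HasSum (fun l : S → ℕ => ρc l * ∏ k, v k ^ l k) (ρfun v)) :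
    HasSum ρc ρ ∧
    (0 < ρ → (∀ l, 0 ≤ ρ⁻¹ * ρc l) ∧ HasSum (fun l : S → ℕ => ρ⁻¹ * ρc l) 1) := by
  classical
  obtain ⟨⟨⟨hρ0, hρ1⟩, hBρ⟩, hρmin⟩ := hρ
  -- coefficient family
  set c : ℝ → ℕ → ℝ := fun t j => if j ∈ S then b j * t else b j with hc_def
  have habs_c : ∀ t : ℝ, t ∈ Set.Icc (0:ℝ) 1 → ∀ j, |c t j| ≤ |b j| := by
    intro t ht j
    by_cases h : j ∈ S
    · simp only [hc_def, if_pos h, abs_mul]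
      calc |b j| * |t| ≤ |b j| * 1 := by
            apply mul_le_mul_of_nonneg_left _ (abs_nonneg _)
            rw [abs_le]; exact ⟨by linarith [ht.1], ht.2⟩
        _ = |b j| := mul_one _
    · simp only [hc_def, if_neg h, le_refl]
  -- G t u
  set G : ℝ → ℝ → ℝ := fun t u => ∑' j : ℕ, c t j * u ^ j with hG_def
  have hdite : ∀ t u : ℝ,
      (∑' j : ℕ, if h : j ∈ S then b j * (fun _ : S => t) ⟨j, h⟩ * u ^ j
        else b j * u ^ j) = G t u := by
    intro t u
    apply tsum_congr
    intro j
    by_cases h : j ∈ S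
    · rw [dif_pos h]; simp only [hc_def, if_pos h]
    · rw [dif_neg h]; simp only [hc_def, if_neg h]
  have hGrel : ∀ t u : ℝ, |u| ≤ 1 →
      G t u = (∑' j : ℕ, b j * u ^ j) - (1 - t) * ∑ k ∈ S, b k * u ^ k :=
    fun t u hu => aux_decomp b hb_sum S t u hu
  have hρabs : |ρ| ≤ 1 := abs_le.2 ⟨by linarith, hρ1⟩
  -- G t ρ ≤ 0 for t ∈ [0,1]
  have hsum_S_nonneg : ∀ u : ℝ, 0 ≤ u → (0:ℝ) ≤ ∑ k ∈ S, b k * u ^ k := by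
    intro u hu
    exact Finset.sum_nonneg fun k hk =>
      mul_nonneg (hbS k hk).le (pow_nonneg hu _)
  have hGρ : ∀ t : ℝ, t ≤ 1 → G t ρ ≤ 0 := by
    intro t ht
    rw [hGrel t ρ hρabs, hBρ]
    have := hsum_S_nonneg ρ hρ0
    nlinarith
  -- G t 0 ≥ 0 for t ≥ 0
  have hG0 : ∀ t : ℝ, 0 ≤ t → 0 ≤ G t 0 := by
    intro t ht
    have : G t 0 = c t 0 := by
      show (∑' j : ℕ, c t j * (0:ℝ) ^ j) = c t 0
      rw [tsum_eq_single 0 (fun j hj => by rw [zero_pow hj, mul_zero]), pow_zero, mul_one]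
    rw [this]
    by_cases h : (0:ℕ) ∈ S
    · simp only [hc_def, if_pos h]
      exact mul_nonneg (hbS 0 h).le ht
    · simp only [hc_def, if_neg h]
      exact hb_nonneg 0 (by norm_num)
  -- continuity of G t
  have hGcont : ∀ t : ℝ, t ∈ Set.Icc (0:ℝ) 1 →
      ContinuousOn (G t) (Set.Icc (-1) 1) := by
    intro t ht
    exact aux_cont hb_sum (habs_c t ht)
  have hsub : Set.Icc (0:ℝ) ρ ⊆ Set.Icc (-1:ℝ) 1 :=
    Set.Icc_subset_Icc (by norm_num) hρ1
  -- least-root facts for constant v = t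
  have hroot : ∀ t : ℝ, t ∈ Set.Ico (0:ℝ) 1 →
      ρfun (fun _ => t) ∈ Set.Icc (0:ℝ) 1 ∧ G t (ρfun (fun _ => t)) = 0 ∧
        ρfun (fun _ => t) ≤ ρ := by
    intro t ht
    have htIcc : t ∈ Set.Icc (0:ℝ) 1 := ⟨ht.1, ht.2.le⟩
    obtain ⟨⟨hmem, heq⟩, hleast⟩ :=
      hρfun (fun _ => t) (fun _ => htIcc)
    rw [hdite] at heq
    refine ⟨hmem, heq, ?_⟩
    -- find a root in [0, ρ] by IVT
    have hivt : (0:ℝ) ∈ G t '' Set.Icc 0 ρ := by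
      apply intermediate_value_Icc' hρ0 ((hGcont t htIcc).mono hsub)
      exact ⟨hGρ t ht.2.le, hG0 t ht.1⟩
    obtain ⟨u, ⟨hu0, huρ⟩, hGu⟩ := hivt
    have : ρfun (fun _ => t) ≤ u := by
      apply hleast
      refine ⟨⟨hu0, huρ.trans hρ1⟩, ?_⟩
      rw [hdite]; exact hGu
    exact this.trans huρ
  -- sums of ρc over constant v
  set σ : (S → ℕ) → ℕ := fun l => ∑ k, l k with hσ_def
  have hHS : ∀ t : ℝ, t ∈ Set.Ico (0:ℝ) 1 →
      HasSum (fun l : S → ℕ => ρc l * t ^ σ l) (ρfun (fun _ => t)) := by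
    intro t ht
    have := hρc (fun _ => t) (fun _ => ht)
    simpa [Finset.prod_pow_eq_pow_sum, hσ_def] using this
  -- partial sums are bounded by ρ
  have hpartial : ∀ F : Finset (S → ℕ), ∑ l ∈ F, ρc l ≤ ρ := by
    intro F
    set N : ℕ := F.sup σ with hN_def
    have key : ∀ t : ℝ, t ∈ Set.Ico (0:ℝ) 1 → (∑ l ∈ F, ρc l) * t ^ N ≤ ρ := by
      intro t ht
      have h1 : ∑ l ∈ F, ρc l * t ^ N ≤ ∑ l ∈ F, ρc l * t ^ σ l := by
        apply Finset.sum_le_sum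
        intro l hl
        exact mul_le_mul_of_nonneg_left
          (pow_le_pow_of_le_one ht.1 ht.2.le (Finset.le_sup hl)) (hρc_nonneg l)
      have h2 : ∑ l ∈ F, ρc l * t ^ σ l ≤ ρfun (fun _ => t) :=
        sum_le_hasSum F (fun l _ => mul_nonneg (hρc_nonneg l) (pow_nonneg ht.1 _))
          (hHS t ht)
      calc (∑ l ∈ F, ρc l) * t ^ N = ∑ l ∈ F, ρc l * t ^ N := by
            rw [Finset.sum_mul]
        _ ≤ ∑ l ∈ F, ρc l * t ^ σ l := h1
        _ ≤ ρfun (fun _ => t) := h2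
        _ ≤ ρ := (hroot t ht).2.2
    -- take t → 1 along 1 - 1/(n+1)
    set tn : ℕ → ℝ := fun n => 1 - 1 / (n + 1) with htn_def
    have htn_mem : ∀ n, tn n ∈ Set.Ico (0:ℝ) 1 := by
      intro n
      have h1 : (0:ℝ) < 1 / (n + 1) := by positivity
      have h2 : 1 / ((n:ℝ) + 1) ≤ 1 := by
        rw [div_le_one (by positivity)]; linarith [Nat.cast_nonneg (α := ℝ) n]
      constructor
      · show (0:ℝ) ≤ 1 - 1 / ((n:ℝ) + 1); linarith
      · show (1:ℝ) - 1 / ((n:ℝ) + 1) < 1; linarith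
    have htends : Tendsto tn atTop (𝓝 1) := by
      have := tendsto_one_div_add_atTop_nhds_zero_nat (𝕜 := ℝ)
      have h := tendsto_const_nhds (x := (1:ℝ)) (f := atTop (α := ℕ)) |>.sub this
      simpa [htn_def] using h
    have hlim : Tendsto (fun n => (∑ l ∈ F, ρc l) * tn n ^ N) atTop
        (𝓝 (∑ l ∈ F, ρc l)) := by
      have := (htends.pow N).const_mul (∑ l ∈ F, ρc l)
      simpa using this
    exact le_of_tendsto hlim (Eventually.of_forall fun n => key (tn n) (htn_mem n))
  -- summability and the candidate sum T
  have hsummable : Summable ρc := summable_of_sum_le hρc_nonneg hpartial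
  set T : ℝ := ∑' l, ρc l with hT_def
  have hTρ_le : T ≤ ρ := Summable.tsum_le_of_sum_le hsummable hpartial
  have hT0 : 0 ≤ T := tsum_nonneg hρc_nonneg
  -- the sequence r n = ρfun (const t_n)
  set tn : ℕ → ℝ := fun n => 1 - 1 / (n + 1) with htn_def
  have htn_mem : ∀ n, tn n ∈ Set.Ico (0:ℝ) 1 := by
    intro n
    have h1 : (0:ℝ) < 1 / (n + 1) := by positivity
    have h2 : 1 / ((n:ℝ) + 1) ≤ 1 := by
      rw [div_le_one (by positivity)]; linarith [Nat.cast_nonneg (α := ℝ) n]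
    constructor
    · show (0:ℝ) ≤ 1 - 1 / ((n:ℝ) + 1); linarith
    · show (1:ℝ) - 1 / ((n:ℝ) + 1) < 1; linarith
  have htends : Tendsto tn atTop (𝓝 1) := by
    have := tendsto_one_div_add_atTop_nhds_zero_nat (𝕜 := ℝ)
    have h := tendsto_const_nhds (x := (1:ℝ)) (f := atTop (α := ℕ)) |>.sub this
    simpa [htn_def] using h
  set r : ℕ → ℝ := fun n => ρfun (fun _ => tn n) with hr_def
  have hr_eq : ∀ n, r n = ∑' l, ρc l * tn n ^ σ l :=
    fun n => ((hHS (tn n) (htn_mem n)).tsum_eq).symm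
  have hr_mem : ∀ n, r n ∈ Set.Icc (0:ℝ) 1 := fun n => (hroot (tn n) (htn_mem n)).1
  have htn_mono : Monotone tn := by
    intro m n hmn
    simp only [htn_def]
    have : 1 / ((n:ℝ) + 1) ≤ 1 / ((m:ℝ) + 1) := by
      apply one_div_le_one_div_of_le (by positivity)
      have : (m:ℝ) ≤ n := Nat.cast_le.2 hmn
      linarith
    linarith
  have hr_mono : Monotone r := by
    intro m n hmn
    rw [hr_eq m, hr_eq n]
    apply Summable.tsum_le_tsum _ (hHS (tn m) (htn_mem m)).summable (hHS (tn n) (htn_mem n)).summable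
    intro l
    exact mul_le_mul_of_nonneg_left
      (pow_le_pow_left₀ (htn_mem m).1 (htn_mono hmn) _) (hρc_nonneg l)
  have hr_leT : ∀ n, r n ≤ T := by
    intro n
    rw [hr_eq n, hT_def]
    apply Summable.tsum_le_tsum _ (hHS (tn n) (htn_mem n)).summable hsummable
    intro l
    exact mul_le_of_le_one_right (hρc_nonneg l)
      (pow_le_one₀ (htn_mem n).1 (htn_mem n).2.le)
  have hbdd : BddAbove (Set.range r) := by
    refine ⟨T, ?_⟩
    rintro x ⟨n, rfl⟩
    exact hr_leT n
  set L : ℝ := ⨆ n, r n with hL_def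
  have htendr : Tendsto r atTop (𝓝 L) := tendsto_atTop_ciSup hr_mono hbdd
  have hr_leL : ∀ n, r n ≤ L := fun n => le_ciSup hbdd n
  have hL_leT : L ≤ T := ciSup_le hr_leT
  have hT_leL : T ≤ L := by
    apply Summable.tsum_le_of_sum_le hsummable
    intro F
    have hlim : Tendsto (fun n => ∑ l ∈ F, ρc l * tn n ^ σ l) atTop
        (𝓝 (∑ l ∈ F, ρc l)) := by
      have : Tendsto (fun n => ∑ l ∈ F, ρc l * tn n ^ σ l) atTop
          (𝓝 (∑ l ∈ F, ρc l * 1 ^ σ l)) := by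
        apply tendsto_finset_sum
        intro l _
        exact (htends.pow (σ l)).const_mul (ρc l)
      simpa using this
    apply le_of_tendsto hlim
    apply Eventually.of_forall
    intro n
    calc ∑ l ∈ F, ρc l * tn n ^ σ l ≤ r n := by
          rw [hr_eq n]
          exact Summable.sum_le_tsum F
            (fun l _ => mul_nonneg (hρc_nonneg l) (pow_nonneg (htn_mem n).1 _))
            (hHS (tn n) (htn_mem n)).summable
      _ ≤ L := hr_leL n
  have hLT : L = T := le_antisymm hL_leT hT_leL
  -- B (r n) → 0
  have hr_abs : ∀ n, |r n| ≤ 1 := fun n => abs_le.2 ⟨by linarith [(hr_mem n).1], (hr_mem n).2⟩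
  have hBr : ∀ n, (∑' j : ℕ, b j * (r n) ^ j)
      = (1 - tn n) * ∑ k ∈ S, b k * (r n) ^ k := by
    intro n
    have h0 : G (tn n) (r n) = 0 := (hroot (tn n) (htn_mem n)).2.1
    rw [hGrel (tn n) (r n) (hr_abs n)] at h0
    linarith
  set C : ℝ := ∑ k ∈ S, b k with hC_def
  have ha_lim : Tendsto (fun n : ℕ => 1 / ((n:ℝ) + 1) * C) atTop (𝓝 0) := by
    have := tendsto_one_div_add_atTop_nhds_zero_nat.mul_const C
    simpa using this
  have hbound : ∀ n : ℕ, ‖∑' j : ℕ, b j * (r n) ^ j‖ ≤ 1 / ((n:ℝ) + 1) * C := by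
    intro n
    rw [hBr n, Real.norm_eq_abs, abs_mul]
    have h1 : |1 - tn n| = 1 / ((n:ℝ) + 1) := by
      rw [htn_def]
      simp only [sub_sub_cancel]
      rw [abs_of_pos (by positivity)]
    rw [h1]
    apply mul_le_mul_of_nonneg_left _ (by positivity)
    rw [abs_of_nonneg (hsum_S_nonneg _ (hr_mem n).1)]
    apply Finset.sum_le_sum
    intro k hk
    calc b k * r n ^ k ≤ b k * 1 :=
          mul_le_mul_of_nonneg_left (pow_le_one₀ (hr_mem n).1 (hr_mem n).2) (hbS k hk).le
      _ = b k := mul_one _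
  have hBr_to0 : Tendsto (fun n => ∑' j : ℕ, b j * (r n) ^ j) atTop (𝓝 0) :=
    squeeze_zero_norm hbound ha_lim
  -- B (r n) → B L by continuity
  have hL_mem : L ∈ Set.Icc (-1:ℝ) 1 :=
    ⟨by linarith [le_trans (hr_mem 0).1 (hr_leL 0)], by linarith [hL_leT, hTρ_le, hρ1]⟩
  have hBcont : ContinuousOn (fun u : ℝ => ∑' j : ℕ, b j * u ^ j) (Set.Icc (-1) 1) :=
    aux_cont hb_sum (fun j => le_refl _)
  have hBr_toBL : Tendsto (fun n => ∑' j : ℕ, b j * (r n) ^ j) atTop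
      (𝓝 (∑' j : ℕ, b j * L ^ j)) := by
    have h1 : Tendsto r atTop (𝓝[Set.Icc (-1:ℝ) 1] L) :=
      tendsto_nhdsWithin_of_tendsto_nhds_of_eventually_within r htendr
        (Eventually.of_forall fun n => ⟨by linarith [(hr_mem n).1], (hr_mem n).2⟩)
    exact ((hBcont L hL_mem).tendsto).comp h1
  have hBL : (∑' j : ℕ, b j * L ^ j) = 0 := tendsto_nhds_unique hBr_toBL hBr_to0
  have hρ_leL : ρ ≤ L := by
    apply hρmin
    refine ⟨⟨?_, hL_mem.2⟩, hBL⟩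
    linarith [le_trans (hr_mem 0).1 (hr_leL 0)]
  have hTρ : T = ρ := le_antisymm hTρ_le (by rw [← hLT]; exact hρ_leL)
  have hmain : HasSum ρc ρ := hTρ ▸ hsummable.hasSum
  refine ⟨hmain, fun hρpos => ⟨fun l => mul_nonneg (inv_nonneg.2 hρpos.le) (hρc_nonneg l), ?_⟩⟩
  have := hmain.mul_left ρ⁻¹
  rwa [inv_mul_cancel₀ hρpos.ne'] at this
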